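/- arXiv:1307.4410 — 2 statements merged into one kernel-verified Lean document; each statement's English description precedes it below -/
import Mathlib

section
/- Let A ∈ M_n(K) have split characteristic polynomial χ_A = ∏(X−λᵢ)^{αᵢ} with distinct λᵢ, and let P = ∏(X−λᵢ) (the radical, equal to χ_A / gcd(χ_A, χ_A′)). Then P′(A) is invertible and its inverse is a polynomial in A. -/
open Polynomial

theorem derivative_radical_eval_invertible
    (K : Type*) [Field K] [CharZero K] (n : ℕ)
    (A : Matrix (Fin n) (Fin n) K)
    (r : ℕ) (lam : Fin r → K) (hlam : Function.Injective lam)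
    (α : Fin r → ℕ) (hα : ∀ i, 1 ≤ α i)
    (hchar : A.charpoly = ∏ i, (Polynomial.X - Polynomial.C (lam i)) ^ α i) :
    IsUnit (Polynomial.aeval A
        (Polynomial.derivative (∏ i, (Polynomial.X - Polynomial.C (lam i))))) ∧
    (Polynomial.aeval A
        (Polynomial.derivative (∏ i, (Polynomial.X - Polynomial.C (lam i)))))⁻¹ ∈
      Algebra.adjoin K {A} := by
  set P : K[X] := ∏ i, (X - C (lam i)) with hP
  have hsep : P.Separable := (Polynomial.separable_prod_X_sub_C_iff).mpr hlam
  -- hsep : IsCoprime P (derivative P)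
  have hcop : IsCoprime A.charpoly (derivative P) := by
    rw [hchar]
    apply IsCoprime.prod_left
    intro i _
    apply IsCoprime.pow_left
    exact hsep.of_isCoprime_of_dvd_left (Finset.dvd_prod_of_mem _ (Finset.mem_univ i))
  obtain ⟨u, v, huv⟩ := hcop
  have hA : aeval A A.charpoly = 0 := Matrix.aeval_self_charpoly A
  have key : aeval A v * aeval A (derivative P) = 1 := by
    have := congrArg (aeval A) huv
    simp only [map_add, map_mul, map_one, hA, mul_zero, zero_add] at this
    simpa using this
  have key' : aeval A (derivative P) * aeval A v = 1 := by
    rw [← map_mul, mul_comm, map_mul, key]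
  refine ⟨⟨⟨aeval A (derivative P), aeval A v, key', key⟩, rfl⟩, ?_⟩
  have hinv : (aeval A (derivative P))⁻¹ = aeval A v :=
    Matrix.inv_eq_left_inv key
  rw [hinv]
  have : Algebra.adjoin K {A} = (aeval A).range :=
    Algebra.adjoin_singleton_eq_range_aeval K A
  rw [this]
  exact ⟨v, rfl⟩
end

section
/- Let A ∈ M_n(ℂ) and P the squarefree part of χ_A. Define the Newton iteration A₀ = A, A_{m+1} = A_m − P(A_m)·P′(A_m)⁻¹. Then the sequence is well-defined (each P′(A_m) is invertible), each A_m is a polynomial in A, P(A_m) ∈ P(A)^{2^m}·ℂ[A], and the sequence is stationary from some rank onward at the diagonalizable part D of the Dunford decomposition A = D + N. -/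
open Polynomial in
theorem aux_sqpart (p : Polynomial ℂ) (hp : p ≠ 0) :
    (p / gcd p (derivative p)).Separable ∧ p ∣ (p / gcd p (derivative p)) ^ (p.natDegree + 1) := by
  set g := gcd p (derivative p) with hg
  set q := p / g with hqdef
  have hg0 : g ≠ 0 := gcd_ne_zero_of_left hp
  have hqg : g * q = p := EuclideanDomain.mul_div_cancel' hg0 (gcd_dvd_left _ _)
  have hq0 : q ≠ 0 := by
    intro h
    rw [h, mul_zero] at hqg
    exact hp hqg.symm
  have key : ∀ t, rootMultiplicity t q = if p.IsRoot t then 1 else 0 := by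
    intro t
    have hmul : rootMultiplicity t g + rootMultiplicity t q = rootMultiplicity t p := by
      rw [← rootMultiplicity_mul (x := t) (hqg ▸ hp), hqg]
    by_cases ht : p.IsRoot t
    · have ha : 1 ≤ rootMultiplicity t p := (rootMultiplicity_pos hp).2 ht
      have hd : rootMultiplicity t (derivative p) = rootMultiplicity t p - 1 :=
        derivative_rootMultiplicity_of_root ht
      have hd0 : derivative p ≠ 0 := by
        intro h0
        have h1 : p.natDegree = 0 := natDegree_eq_zero_of_derivative_eq_zero h0
        obtain ⟨c, rfl⟩ := natDegree_eq_zero.mp h1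
        simp only [IsRoot, eval_C] at ht
        exact hp (by rw [ht, map_zero])
      have hle : rootMultiplicity t g ≤ rootMultiplicity t p - 1 := by
        have h2 : rootMultiplicity t g ≤ rootMultiplicity t (derivative p) :=
          (le_rootMultiplicity_iff hd0).mpr
            ((pow_rootMultiplicity_dvd g t).trans (gcd_dvd_right _ _))
        omega
      have hge : rootMultiplicity t p - 1 ≤ rootMultiplicity t g := by
        rw [le_rootMultiplicity_iff hg0]
        refine dvd_gcd ?_ ?_
        · exact (pow_dvd_pow _ (Nat.sub_le _ _)).trans (pow_rootMultiplicity_dvd p t)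
        · rw [← hd]; exact pow_rootMultiplicity_dvd _ t
      rw [if_pos ht]
      omega
    · rw [if_neg ht]
      have h3 : rootMultiplicity t p = 0 := rootMultiplicity_eq_zero ht
      omega
  constructor
  · refine (nodup_roots_iff_of_splits hq0 (IsAlgClosed.splits q)).mp ?_
    rw [Multiset.nodup_iff_count_le_one]
    intro t
    rw [count_roots, key t]
    split <;> omega
  · rw [Splits.dvd_iff_roots_le_roots (IsAlgClosed.splits p) hp
      (pow_ne_zero _ hq0), roots_pow, Multiset.le_iff_count]
    intro t
    rw [Multiset.count_nsmul, count_roots, count_roots, key t]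
    by_cases ht : p.IsRoot t
    · rw [if_pos ht, mul_one]
      have : rootMultiplicity t p ≤ p.natDegree := by
        have h4 := natDegree_le_of_dvd (pow_rootMultiplicity_dvd p t) hp
        rwa [natDegree_pow, natDegree_X_sub_C, mul_one] at h4
      omega
    · rw [rootMultiplicity_eq_zero ht]
      omega


open Polynomial in
theorem aux_diag {n : ℕ} (D : Matrix (Fin n) (Fin n) ℂ) (P : Polynomial ℂ)
    (hsq : Squarefree P) (h : Polynomial.aeval D P = 0) :
    ∃ Q : Matrix (Fin n) (Fin n) ℂ, IsUnit Q.det ∧ (Q * D * Q⁻¹).IsDiag := by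
  set f : Module.End ℂ (Fin n → ℂ) := Matrix.mulVecLin D with hfdef
  have hfv : ∀ v, f v = D.mulVec v := fun v => rfl
  have hf : Polynomial.aeval f P = 0 := by
    have : f = Matrix.toLinAlgEquiv' D := rfl
    rw [this, aeval_algHom_apply (Matrix.toLinAlgEquiv' : Matrix (Fin n) (Fin n) ℂ ≃ₐ[ℂ]
      Module.End ℂ (Fin n → ℂ)) D P, h, map_zero]
  have hss := Module.End.isSemisimple_of_squarefree_aeval_eq_zero hsq hf
  have htop : ⨆ μ, f.eigenspace μ = ⊤ := by
    have h1 := Module.End.iSup_maxGenEigenspace_eq_top f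
    simp_rw [hss.isFinitelySemisimple.maxGenEigenspace_eq_eigenspace] at h1
    exact h1
  have hspan : Submodule.span ℂ (⋃ μ, (f.eigenspace μ : Set (Fin n → ℂ))) = ⊤ := by
    rw [← Submodule.iSup_eq_span, htop]
  obtain ⟨b, hbsub, hbspan, hbli⟩ :=
    exists_linearIndependent ℂ (⋃ μ, (f.eigenspace μ : Set (Fin n → ℂ)))
  rw [hspan] at hbspan
  let bb : Module.Basis b ℂ (Fin n → ℂ) := Module.Basis.mk hbli (by rw [Subtype.range_val, hbspan])
  let e := bb.indexEquiv (Pi.basisFun ℂ (Fin n))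
  let c : Module.Basis (Fin n) ℂ (Fin n → ℂ) := bb.reindex e
  have hc : ∀ i, ∃ μ : ℂ, D.mulVec (c i) = μ • (c i) := by
    intro i
    have h2 : c i ∈ ⋃ μ, (f.eigenspace μ : Set (Fin n → ℂ)) := by
      have h3 : c i = (e.symm i : Fin n → ℂ) := by
        rw [show c i = bb (e.symm i) from bb.reindex_apply e i, Module.Basis.mk_apply]
      rw [h3]
      exact hbsub (e.symm i).2
    obtain ⟨s, ⟨μ, rfl⟩, hmem⟩ := h2
    exact ⟨μ, by rw [← hfv]; exact Module.End.mem_eigenspace_iff.mp hmem⟩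
  choose μv hμv using hc
  let Q' : Matrix (Fin n) (Fin n) ℂ := (Pi.basisFun ℂ (Fin n)).toMatrix ⇑c
  have : Invertible Q' := (Pi.basisFun ℂ (Fin n)).invertibleToMatrix c
  have hdet : IsUnit Q'.det := Matrix.isUnit_det_of_invertible Q'
  have hQ'e : ∀ i j, Q' i j = c j i := by
    intro i j
    simp [Q', Module.Basis.toMatrix_apply, Pi.basisFun_repr]
  have hcomm : D * Q' = Q' * Matrix.diagonal μv := by
    ext i j
    rw [Matrix.mul_apply, Matrix.mul_apply]
    calc ∑ k, D i k * Q' k j = (D.mulVec (c j)) i := by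
          simp [Matrix.mulVec, dotProduct, hQ'e]
      _ = μv j * c j i := by rw [hμv j]; simp
      _ = ∑ k, Q' i k * Matrix.diagonal μv k j := by
          rw [Finset.sum_eq_single j]
          · rw [hQ'e, Matrix.diagonal_apply_eq]; ring
          · intro k _ hk
            rw [Matrix.diagonal_apply_ne _ hk, mul_zero]
          · intro hj; exact absurd (Finset.mem_univ j) hj
  refine ⟨Q'⁻¹, ?_, ?_⟩
  · exact Q'.isUnit_nonsing_inv_det hdet
  · rw [Matrix.nonsing_inv_nonsing_inv Q' hdet, mul_assoc, hcomm, ← mul_assoc,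
      Matrix.nonsing_inv_mul Q' hdet, one_mul]
    exact Matrix.isDiag_diagonal μv


theorem newton_raphson_dunford
    (n : ℕ) (A : Matrix (Fin n) (Fin n) ℂ)
    (P : Polynomial ℂ)
    (hP : P = A.charpoly / gcd A.charpoly (Polynomial.derivative A.charpoly))
    (Aseq : ℕ → Matrix (Fin n) (Fin n) ℂ)
    (h0 : Aseq 0 = A)
    (hstep : ∀ m, Aseq (m + 1) = Aseq m -
      Polynomial.aeval (Aseq m) P * (Polynomial.aeval (Aseq m) (Polynomial.derivative P))⁻¹) :
    (∀ m, IsUnit (Polynomial.aeval (Aseq m) (Polynomial.derivative P))) ∧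
    (∀ m, Aseq m ∈ Algebra.adjoin ℂ {A}) ∧
    (∀ m, ∃ B ∈ Algebra.adjoin ℂ {A},
      Polynomial.aeval (Aseq m) P = (Polynomial.aeval A P) ^ (2 ^ m) * B) ∧
    ∃ (m₀ : ℕ) (D N : Matrix (Fin n) (Fin n) ℂ),
      (∀ m, m₀ ≤ m → Aseq m = D) ∧
      A = D + N ∧
      (∃ Q : Matrix (Fin n) (Fin n) ℂ, IsUnit Q.det ∧ (Q * D * Q⁻¹).IsDiag) ∧
      IsNilpotent N ∧ Commute D N := by
  classical
  -- basic properties of the squarefree part P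
  have hχ0 : A.charpoly ≠ 0 := A.charpoly_monic.ne_zero
  obtain ⟨hsep, hdvd⟩ := by
    have := aux_sqpart A.charpoly hχ0
    rwa [← hP] at this
  have hsq : Squarefree P := hsep.squarefree
  -- the commutative subalgebra generated by A
  set S := Algebra.adjoin ℂ ({A} : Set (Matrix (Fin n) (Fin n) ℂ)) with hS
  set a : S := ⟨A, Algebra.self_mem_adjoin_singleton ℂ A⟩ with ha
  have hvala : (S.val a : Matrix (Fin n) (Fin n) ℂ) = A := rfl
  -- nilpotency of P(a)
  have h_nil : IsNilpotent (Polynomial.aeval a P) := by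
    refine ⟨A.charpoly.natDegree + 1, ?_⟩
    apply Subtype.coe_injective
    have : (S.val (Polynomial.aeval a P) : Matrix (Fin n) (Fin n) ℂ)
        = Polynomial.aeval A P := by
      rw [← hvala, ← Polynomial.aeval_algHom_apply]
    obtain ⟨c, hc⟩ := hdvd
    calc ((Polynomial.aeval a P ^ (A.charpoly.natDegree + 1) : S) :
            Matrix (Fin n) (Fin n) ℂ)
        = (Polynomial.aeval A P) ^ (A.charpoly.natDegree + 1) := by
          push_cast [this]; rfl
      _ = Polynomial.aeval A (P ^ (A.charpoly.natDegree + 1)) := by rw [map_pow]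
      _ = Polynomial.aeval A (A.charpoly * c) := by rw [← hc]
      _ = 0 := by rw [map_mul, Matrix.aeval_self_charpoly, zero_mul]
  -- P'(a) is a unit in S
  have h_unit : IsUnit (Polynomial.aeval a (Polynomial.derivative P)) := by
    obtain ⟨u, v, huv⟩ := hsep
    have h1 : Polynomial.aeval a u * Polynomial.aeval a P +
        Polynomial.aeval a v * Polynomial.aeval a (Polynomial.derivative P) = 1 := by
      rw [← map_mul, ← map_mul, ← map_add, huv, map_one]
    have h2 : IsUnit (Polynomial.aeval a v *
        Polynomial.aeval a (Polynomial.derivative P)) := by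
      have h3 : IsNilpotent (Polynomial.aeval a u * Polynomial.aeval a P) :=
        (Commute.all _ _).isNilpotent_mul_left h_nil
      have h4 : Polynomial.aeval a v * Polynomial.aeval a (Polynomial.derivative P)
          = 1 - Polynomial.aeval a u * Polynomial.aeval a P := by
        rw [← h1]; ring
      rw [h4]
      exact h3.isUnit_one_sub
    exact isUnit_of_mul_isUnit_right (by rwa [mul_comm] at h2)
  -- units along the iteration
  have hux : ∀ m, IsUnit (Polynomial.aeval (P.newtonMap^[m] a)
      (Polynomial.derivative P)) := fun m =>
    Polynomial.isUnit_aeval_of_isUnit_aeval_of_isNilpotent_sub h_unit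
      (Polynomial.isNilpotent_iterate_newtonMap_sub_of_isNilpotent h_nil m)
  -- the sequence is the Newton iteration inside S
  have key : ∀ m, Aseq m = S.val (P.newtonMap^[m] a) := by
    intro m
    induction m with
    | zero => rw [h0, Function.iterate_zero, id, hvala]
    | succ m ih =>
      set x := P.newtonMap^[m] a with hx
      have hum := hux m
      have hinv : (Polynomial.aeval (Aseq m) (Polynomial.derivative P))⁻¹
          = S.val ((hum.unit⁻¹ : Sˣ) : S) := by
        apply Matrix.inv_eq_right_inv
        rw [ih, Polynomial.aeval_algHom_apply, ← map_mul, IsUnit.mul_val_inv, map_one]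
      rw [hstep m, hinv, ih, Polynomial.aeval_algHom_apply, ← map_mul, ← map_sub,
        Function.iterate_succ_apply']
      exact congrArg S.val (by rw [hx, Polynomial.newtonMap_apply_of_isUnit hum, mul_comm])
  refine ⟨?_, ?_, ?_, ?_⟩
  · -- units
    intro m
    rw [key m, Polynomial.aeval_algHom_apply]
    exact (hux m).map S.val
  · -- membership
    intro m
    rw [key m]
    exact (P.newtonMap^[m] a).2
  · -- divisibility
    intro m
    obtain ⟨c, hc⟩ :=
      Polynomial.aeval_pow_two_pow_dvd_aeval_iterate_newtonMap h_nil h_unit m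
    refine ⟨S.val c, c.2, ?_⟩
    rw [key m, Polynomial.aeval_algHom_apply, hc, map_mul, map_pow,
      ← Polynomial.aeval_algHom_apply, hvala]
  · -- stationarity and Dunford decomposition
    obtain ⟨k, hk⟩ := id h_nil
    set x := P.newtonMap^[k] a with hxdef
    have hroot : Polynomial.aeval x P = 0 := by
      rw [← zero_dvd_iff, ← pow_eq_zero_of_le (Nat.lt_two_pow_self (n := k)).le hk]
      exact Polynomial.aeval_pow_two_pow_dvd_aeval_iterate_newtonMap h_nil h_unit k
    have hfix : Function.IsFixedPt P.newtonMap x :=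
      Polynomial.isFixedPt_newtonMap_of_aeval_eq_zero hroot
    refine ⟨k, S.val x, A - S.val x, ?_, by abel, ?_, ?_, ?_⟩
    · intro m hm
      obtain ⟨j, rfl⟩ := Nat.exists_eq_add_of_le hm
      rw [key (k + j), add_comm, Function.iterate_add_apply, ← hxdef, hfix.iterate j]
    · -- diagonalizability
      refine aux_diag (S.val x) P hsq ?_
      rw [Polynomial.aeval_algHom_apply, hroot, map_zero]
    · -- nilpotency of N
      have h5 : IsNilpotent (a - x) := by
        have := Polynomial.isNilpotent_iterate_newtonMap_sub_of_isNilpotent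
          (x := a) ⟨k, hk⟩ k
        rw [← hxdef] at this
        rw [← neg_sub x a]
        exact this.neg
      obtain ⟨j, hj⟩ := h5
      refine ⟨j, ?_⟩
      have h6 := congrArg S.val hj
      rw [map_pow, map_sub, hvala, map_zero] at h6
      exact h6
    · -- commutation
      have h7 : x * (a - x) = (a - x) * x := mul_comm _ _
      have h8 := congrArg S.val h7
      rw [map_mul, map_mul, map_sub, hvala] at h8
      exact h8
end
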